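/- arXiv:1207.2598 — 6 statements merged into one kernel-verified Lean document; each statement's English description precedes it below -/
import Mathlib

section
/- The vertex ranking number of the path graph P_n on n vertices equals ⌊log₂ n⌋ + 1. -/
/-- A vertex ranking of a graph `G`: on every simple path between distinct,
equally-colored vertices there is an internal vertex of strictly larger color. -/
def IsVertexRanking {V : Type*} (G : SimpleGraph V) (c : V → ℕ) : Prop :=
  ∀ ⦃x y : V⦄, x ≠ y → ∀ p : G.Walk x y, p.IsPath → c x = c y →
    ∃ z ∈ p.support, z ≠ x ∧ z ≠ y ∧ c x < c z

/-- The vertex ranking number: the minimum number of colors in a vertex ranking. -/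
noncomputable def vertexRankingNumber {V : Type*} (G : SimpleGraph V) : ℕ :=
  sInf {k : ℕ | ∃ c : V → ℕ, (∀ v, c v < k) ∧ IsVertexRanking G c}

namespace VRAux
open SimpleGraph

lemma mem_support_of_between {n : ℕ} {x y : Fin n} (p : (pathGraph n).Walk x y)
    (z : Fin n) (hz : (x.val ≤ z.val ∧ z.val ≤ y.val) ∨ (y.val ≤ z.val ∧ z.val ≤ x.val)) :
    z ∈ p.support := by
  induction p with
  | nil =>
    simp only [SimpleGraph.Walk.support_nil, List.mem_singleton]
    exact Fin.ext (by omega)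
  | @cons a w y h q ih =>
    by_cases hza : z = a
    · simp [hza]
    · have hza' : z.val ≠ a.val := fun hh => hza (Fin.ext hh)
      rw [pathGraph_adj] at h
      simp only [SimpleGraph.Walk.support_cons, List.mem_cons]
      right
      rcases h with h | h <;> exact ih (by omega)

def upWalk (n : ℕ) : (i d : ℕ) → (h : i + d < n) → (pathGraph n).Walk ⟨i, by omega⟩ ⟨i + d, h⟩
  | _, 0, _ => SimpleGraph.Walk.nil
  | i, d + 1, h =>
    SimpleGraph.Walk.cons
      (show (pathGraph n).Adj ⟨i, by omega⟩ ⟨i + 1, by omega⟩ by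
        rw [pathGraph_adj]; left; rfl)
      ((upWalk n (i + 1) d (by omega : i + 1 + d < n)).copy rfl
        (Fin.ext (show i + 1 + d = i + (d + 1) by omega)))

lemma upWalk_support {n : ℕ} : ∀ (i d : ℕ) (h : i + d < n),
    ∀ z ∈ (upWalk n i d h).support, i ≤ z.val ∧ z.val ≤ i + d := by
  intro i d
  induction d generalizing i with
  | zero =>
    intro h z hz
    simp only [upWalk, SimpleGraph.Walk.support_nil, List.mem_singleton] at hz
    subst hz; simp
  | succ d ih =>
    intro h z hz
    simp only [upWalk, SimpleGraph.Walk.support_cons, SimpleGraph.Walk.support_copy,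
      List.mem_cons] at hz
    rcases hz with hz | hz
    · subst hz; simp only [Fin.val_mk]; omega
    · have := ih (i + 1) (by omega) z hz
      omega

lemma upWalk_isPath {n : ℕ} : ∀ (i d : ℕ) (h : i + d < n), (upWalk n i d h).IsPath := by
  intro i d
  induction d generalizing i with
  | zero => intro h; simp only [upWalk]; exact SimpleGraph.Walk.IsPath.nil
  | succ d ih =>
    intro h
    simp only [upWalk]
    rw [SimpleGraph.Walk.cons_isPath_iff]
    refine ⟨by simpa using ih (i + 1) (by omega), ?_⟩
    intro hmem
    rw [SimpleGraph.Walk.support_copy] at hmem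
    have := upWalk_support (i + 1) d (by omega) _ hmem
    simp only [Fin.val_mk] at this
    omega
end VRAux

namespace VRAuxC
lemma exists_between {a b : ℕ} (ha : 0 < a) (hab : a < b)
    (h : padicValNat 2 a = padicValNat 2 b) :
    ∃ m, a < m ∧ m < b ∧ padicValNat 2 a < padicValNat 2 m := by
  have fact2 : Fact (Nat.Prime 2) := ⟨Nat.prime_two⟩
  set v := padicValNat 2 a with hv
  obtain ⟨a2, ha2⟩ : 2 ^ v ∣ a := pow_padicValNat_dvd
  obtain ⟨b2, hb2⟩ : 2 ^ v ∣ b := by rw [h]; exact pow_padicValNat_dvd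
  have hna : ¬ 2 ^ (v + 1) ∣ a := pow_succ_padicValNat_not_dvd (by omega)
  have hnb : ¬ 2 ^ (v + 1) ∣ b := by
    rw [h]; exact pow_succ_padicValNat_not_dvd (by omega)
  have ha2odd : a2 % 2 = 1 := by
    rcases Nat.even_or_odd a2 with ⟨t, ht⟩ | ⟨t, ht⟩
    · exact absurd ⟨t, by rw [ha2, ht, pow_succ]; ring⟩ hna
    · omega
  have hb2odd : b2 % 2 = 1 := by
    rcases Nat.even_or_odd b2 with ⟨t, ht⟩ | ⟨t, ht⟩
    · exact absurd ⟨t, by rw [hb2, ht, pow_succ]; ring⟩ hnb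
    · omega
  have hpow : 1 ≤ 2 ^ v := Nat.one_le_two_pow
  have ha2b2 : a2 < b2 := by
    rcases Nat.lt_or_ge a2 b2 with h' | h'
    · exact h'
    · have : b ≤ a := by rw [ha2, hb2]; exact Nat.mul_le_mul_left _ h'
      omega
  have ha2b2' : a2 + 1 < b2 := by omega
  refine ⟨2 ^ v * (a2 + 1), ?_, ?_, ?_⟩
  · rw [ha2]; exact (Nat.mul_lt_mul_left (by positivity)).mpr (by omega)
  · rw [hb2]; exact (Nat.mul_lt_mul_left (by positivity)).mpr ha2b2'
  · have hdvd : 2 ^ (v + 1) ∣ 2 ^ v * (a2 + 1) := by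
      obtain ⟨t, ht⟩ : 2 ∣ a2 + 1 := by omega
      exact ⟨t, by rw [ht, pow_succ]; ring⟩
    have hm0 : 2 ^ v * (a2 + 1) ≠ 0 := by positivity
    exact Nat.lt_of_succ_le ((padicValNat_dvd_iff_le hm0).mp hdvd)
end VRAuxC

namespace VRAuxB
open SimpleGraph VRAux

lemma interval_bound {n : ℕ} (c : Fin n → ℕ) (hr : IsVertexRanking (pathGraph n) c) :
    ∀ (k a b : ℕ), b ≤ n → (∀ i (hi : i < n), a ≤ i → i < b → c ⟨i, hi⟩ < k) →
      b - a ≤ 2 ^ k - 1 := by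
  intro k
  induction k with
  | zero =>
    intro a b hb hc
    by_contra h
    have hab : a < b := by omega
    exact absurd (hc a (by omega) le_rfl hab) (by omega)
  | succ k ih =>
    intro a b hb hc
    by_cases hab : b ≤ a
    · omega
    push_neg at hab
    set S : Finset (Fin n) := Finset.univ.filter (fun v => a ≤ v.val ∧ v.val < b) with hS
    have hSne : S.Nonempty := ⟨⟨a, by omega⟩, by simp [hS]; omega⟩
    obtain ⟨z, hzS, hzmax⟩ := S.exists_max_image c hSne
    simp only [hS, Finset.mem_filter, Finset.mem_univ, true_and] at hzS
    have huniq : ∀ w : Fin n, a ≤ w.val → w.val < b → w ≠ z → c w < c z := by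
      intro w hwa hwb hwz
      have hle : c w ≤ c z := hzmax w (by simp [hS]; omega)
      rcases lt_or_eq_of_le hle with h | h
      · exact h
      · exfalso
        have hvalne : w.val ≠ z.val := fun hh => hwz (Fin.ext hh)
        rcases lt_or_gt_of_ne hvalne with hlt | hlt
        · have hwzeq : (⟨w.val + (z.val - w.val), by omega⟩ : Fin n) = z :=
            Fin.ext (by simp only [Fin.val_mk]; omega)
          obtain ⟨u, hu, hux, huy, hcu⟩ := hr hwz
            ((upWalk n w.val (z.val - w.val) (by omega)).copy (Fin.ext rfl) hwzeq)
            (by rw [SimpleGraph.Walk.isPath_copy]; exact upWalk_isPath _ _ _) (by rw [h])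
          rw [SimpleGraph.Walk.support_copy] at hu
          have h1 := upWalk_support w.val (z.val - w.val) (by omega) u hu
          have h2 : c u ≤ c z := hzmax u (by simp [hS]; omega)
          omega
        · have hwzeq : (⟨z.val + (w.val - z.val), by omega⟩ : Fin n) = w :=
            Fin.ext (by simp only [Fin.val_mk]; omega)
          obtain ⟨u, hu, hux, huy, hcu⟩ := hr hwz.symm
            ((upWalk n z.val (w.val - z.val) (by omega)).copy (Fin.ext rfl) hwzeq)
            (by rw [SimpleGraph.Walk.isPath_copy]; exact upWalk_isPath _ _ _) (by rw [h])
          rw [SimpleGraph.Walk.support_copy] at hu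
          have h1 := upWalk_support z.val (w.val - z.val) (by omega) u hu
          have h2 : c u ≤ c z := hzmax u (by simp [hS]; omega)
          omega
    have hzk : c z < k + 1 := hc z.val z.isLt hzS.1 hzS.2
    have h1 : z.val - a ≤ 2 ^ k - 1 := by
      apply ih a z.val (by omega)
      intro i hi hia hib
      have := huniq ⟨i, hi⟩ hia (show i < b by omega) (Fin.ne_of_val_ne (show i ≠ z.val by omega))
      omega
    have h2 : b - (z.val + 1) ≤ 2 ^ k - 1 := by
      apply ih (z.val + 1) b hb
      intro i hi hia hib
      have := huniq ⟨i, hi⟩ (show a ≤ i by omega) hib (Fin.ne_of_val_ne (show i ≠ z.val by omega))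
      omega
    have hpow : 1 ≤ 2 ^ k := Nat.one_le_two_pow
    have hsum : (2 : ℕ) ^ (k + 1) = 2 ^ k + 2 ^ k := by ring
    omega
end VRAuxB

/-- The vertex ranking number of the path graph `P_n` equals `⌊log₂ n⌋ + 1`. -/
theorem vertexRankingNumber_pathGraph (n : ℕ) (hn : 1 ≤ n) :
    vertexRankingNumber (SimpleGraph.pathGraph n) = Nat.log 2 n + 1 := by
  classical
  set c : Fin n → ℕ := fun v => padicValNat 2 (v.val + 1) with hc
  have hcbound : ∀ v : Fin n, c v < Nat.log 2 n + 1 := by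
    intro v
    have h1 : padicValNat 2 (v.val + 1) ≤ Nat.log 2 (v.val + 1) :=
      padicValNat_le_nat_log _
    have h2 : Nat.log 2 (v.val + 1) ≤ Nat.log 2 n :=
      Nat.log_mono_right (by omega)
    simp only [hc]
    omega
  have hrank : IsVertexRanking (SimpleGraph.pathGraph n) c := by
    have key : ∀ (x y : Fin n), x.val < y.val → c x = c y →
        ∀ p : (SimpleGraph.pathGraph n).Walk x y,
        ∃ z ∈ p.support, z ≠ x ∧ z ≠ y ∧ c x < c z := by
      intro x y hxy hcxy p
      simp only [hc] at hcxy
      obtain ⟨m, hm1, hm2, hm3⟩ := VRAuxC.exists_between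
        (a := x.val + 1) (b := y.val + 1) (Nat.succ_pos _) (by omega) hcxy
      have hmn : m - 1 < n := by have := y.isLt; omega
      refine ⟨⟨m - 1, hmn⟩, ?_, ?_, ?_, ?_⟩
      · exact VRAux.mem_support_of_between p _
          (Or.inl ⟨show x.val ≤ m - 1 by omega, show m - 1 ≤ y.val by omega⟩)
      · exact Fin.ne_of_val_ne (show m - 1 ≠ x.val by omega)
      · exact Fin.ne_of_val_ne (show m - 1 ≠ y.val by omega)
      · simp only [hc]
        have hme : m - 1 + 1 = m := by omega
        show padicValNat 2 (x.val + 1) < padicValNat 2 (m - 1 + 1)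
        rw [hme]
        exact hm3
    intro x y hxy p hp hcxy
    rcases lt_or_gt_of_ne (fun hh : x.val = y.val => hxy (Fin.ext hh)) with h | h
    · exact key x y h hcxy p
    · obtain ⟨z, hz, hzx, hzy, hcz⟩ := key y x h hcxy.symm p.reverse
      rw [SimpleGraph.Walk.support_reverse, List.mem_reverse] at hz
      exact ⟨z, hz, hzy, hzx, hcxy ▸ hcz⟩
  apply le_antisymm
  · exact Nat.sInf_le ⟨c, hcbound, hrank⟩
  · have hne : {k : ℕ | ∃ c : Fin n → ℕ, (∀ v, c v < k) ∧
        IsVertexRanking (SimpleGraph.pathGraph n) c}.Nonempty :=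
      ⟨Nat.log 2 n + 1, c, hcbound, hrank⟩
    apply le_csInf hne
    rintro k ⟨c', hc'b, hc'r⟩
    have hib := VRAuxB.interval_bound c' hc'r k 0 n le_rfl (fun i hi _ _ => hc'b ⟨i, hi⟩)
    have hpow : 1 ≤ 2 ^ k := Nat.one_le_two_pow
    have hlt : n < 2 ^ k := by omega
    have := Nat.log_lt_of_lt_pow (by omega : n ≠ 0) hlt
    omega
end

section
/- Let H=(X,R) be an I-type hypergraph with a unique-max coloring c, and let S be a finite set of ranges such that each range in S is assigned a distinct 'stabbing point' which is its unique maximum-color point. Then any two distinct ranges in S whose stabbing points have the same color are disjoint. -/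
/-- A hypergraph (ranges `R` over ground set `X`) is I-type if the union of two
intersecting ranges is a range. -/
def IType {X : Type*} [DecidableEq X] (R : Set (Finset X)) : Prop :=
  ∀ r₁ ∈ R, ∀ r₂ ∈ R, (r₁ ∩ r₂).Nonempty → r₁ ∪ r₂ ∈ R

/-- A coloring is unique-max if every range has exactly one point achieving the
maximum color within the range. -/
def UniqueMax {X : Type*} (R : Set (Finset X)) (c : X → ℕ) : Prop :=
  ∀ r ∈ R, ∃! x, x ∈ r ∧ c x = r.sup c

/-- Let `S` be a finite set of ranges of an I-type hypergraph with a unique-max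
coloring, where each range is assigned its unique maximum-color point as its
stabbing point, and distinct ranges in `S` get distinct stabbing points.  Then
any two distinct ranges of `S` whose stabbing points have the same color are
disjoint. -/
theorem sameColor_stab_disjoint {X : Type*} [DecidableEq X]
    (R : Set (Finset X)) (hI : IType R) (c : X → ℕ) (hum : UniqueMax R c)
    (S : Finset (Finset X)) (hS : ∀ r ∈ S, r ∈ R)
    (stab : Finset X → X)
    (hstab : ∀ r ∈ S, stab r ∈ r ∧ c (stab r) = r.sup c)
    (hinj : ∀ r₁ ∈ S, ∀ r₂ ∈ S, r₁ ≠ r₂ → stab r₁ ≠ stab r₂) :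
    ∀ r₁ ∈ S, ∀ r₂ ∈ S, r₁ ≠ r₂ → c (stab r₁) = c (stab r₂) →
      Disjoint r₁ r₂ := by
  intro r₁ h₁ r₂ h₂ hne hc
  by_contra hdisj
  rw [Finset.not_disjoint_iff_nonempty_inter] at hdisj
  have hu : r₁ ∪ r₂ ∈ R := hI r₁ (hS r₁ h₁) r₂ (hS r₂ h₂) hdisj
  obtain ⟨s₁, e₁⟩ := hstab r₁ h₁
  obtain ⟨s₂, e₂⟩ := hstab r₂ h₂
  have hsup : (r₁ ∪ r₂).sup c = c (stab r₁) := by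
    rw [Finset.sup_union, ← e₁, ← e₂, hc]
    exact max_self _
  obtain ⟨x, _, hx⟩ := hum _ hu
  have q₁ : stab r₁ = x := hx _ ⟨Finset.mem_union_left _ s₁, by rw [hsup]⟩
  have q₂ : stab r₂ = x := hx _ ⟨Finset.mem_union_right _ s₂, by rw [hsup, hc]⟩
  exact hinj r₁ h₁ r₂ h₂ hne (q₁.trans q₂.symm)
end

section
/- Consider the hypergraph on ground set X={1,…,n} whose ranges are all discrete intervals [i,j] with 1≤i≤j≤n. The minimum number of colors in a unique-max coloring of this hypergraph is exactly ⌊log₂ n⌋ + 1. -/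
/-- Lower bound: any unique-max coloring of an interval of length `m` with colors `< k`
satisfies `log₂ m + 1 ≤ k`. -/
lemma umc_lower (m : ℕ) : ∀ a b : ℕ, ∀ c : ℕ → ℕ, ∀ k : ℕ, 1 ≤ m → b + 1 = a + m →
    (∀ x ∈ Finset.Icc a b, c x < k) →
    (∀ i j : ℕ, a ≤ i → i ≤ j → j ≤ b →
      ∃! x, x ∈ Finset.Icc i j ∧ c x = (Finset.Icc i j).sup c) →
    Nat.log 2 m + 1 ≤ k := by
  induction m using Nat.strong_induction_on with
  | _ m IH =>
    intro a b c k hm hlen hcol hum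
    have hab : a ≤ b := by omega
    by_cases hm1 : m = 1
    · subst hm1
      simp only [Nat.log_one_right]
      have := hcol a (by simp [Finset.mem_Icc]; omega)
      omega
    -- m ≥ 2
    have hm2 : 2 ≤ m := by omega
    obtain ⟨x, ⟨hxmem, hxsup⟩, huniq⟩ := hum a b le_rfl hab le_rfl
    rw [Finset.mem_Icc] at hxmem
    have hcx : c x < k := hcol x (by rw [Finset.mem_Icc]; exact hxmem)
    -- all other points have strictly smaller color
    have hlt : ∀ y ∈ Finset.Icc a b, y ≠ x → c y < c x := by
      intro y hy hyx
      have hle : c y ≤ (Finset.Icc a b).sup c := Finset.le_sup hy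
      rw [← hxsup] at hle
      rcases lt_or_eq_of_le hle with h | h
      · exact h
      · exact absurd (huniq y ⟨hy, h.trans hxsup⟩) hyx
    -- side lengths
    set L := x - a with hL
    set R := b - x with hR
    have hsum : L + R + 1 = m := by omega
    -- key step: apply IH to a side of length s with colors < k - 1
    have key : ∀ i j s : ℕ, a ≤ i → j + 1 = i + s → j ≤ b → 1 ≤ s → s < m →
        (∀ y, i ≤ y → y ≤ j → y ≠ x) → Nat.log 2 s + 1 ≤ k - 1 := by
      intro i j s hai hlen' hjb hs hsm hne
      refine IH s hsm i j c (k - 1) hs hlen' ?_ ?_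
      · intro y hy
        rw [Finset.mem_Icc] at hy
        have h1 : c y < c x := hlt y (by rw [Finset.mem_Icc]; omega) (hne y hy.1 hy.2)
        omega
      · intro i' j' h1 h2 h3
        exact hum i' j' (by omega) h2 (by omega)
    have hstep : Nat.log 2 (m / 2) + 1 ≤ k - 1 := by
      rcases le_total L R with hLR | hLR
      · -- right side [x+1, b] has length R ≥ m/2
        have hR1 : 1 ≤ R := by omega
        have := key (x + 1) b R (by omega) (by omega) le_rfl hR1 (by omega) (by intro y h1 h2; omega)
        have hmono : Nat.log 2 (m / 2) ≤ Nat.log 2 R := Nat.log_mono_right (by omega)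
        omega
      · -- left side [a, x-1] has length L ≥ m/2
        have hL1 : 1 ≤ L := by omega
        have := key a (x - 1) L le_rfl (by omega) (by omega) hL1 (by omega) (by intro y h1 h2; omega)
        have hmono : Nat.log 2 (m / 2) ≤ Nat.log 2 L := Nat.log_mono_right (by omega)
        omega
    have hdiv : Nat.log 2 (m / 2) = Nat.log 2 m - 1 := Nat.log_div_base 2 m
    have hpos : 0 < Nat.log 2 m := Nat.log_pos (by norm_num) hm2
    omega

/-- The minimum number of colors in a unique-max coloring of the hypergraph of
discrete intervals on `{1,…,n}` is exactly `⌊log₂ n⌋ + 1`. -/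
theorem uniqueMaxChromatic_intervals (n : ℕ) (hn : 1 ≤ n) :
    sInf {k : ℕ | ∃ c : ℕ → ℕ, (∀ x ∈ Finset.Icc 1 n, c x < k) ∧
        ∀ i j : ℕ, 1 ≤ i → i ≤ j → j ≤ n →
          ∃! x, x ∈ Finset.Icc i j ∧ c x = (Finset.Icc i j).sup c}
      = Nat.log 2 n + 1 := by
  have hp2 : Nat.Prime 2 := Nat.prime_two
  -- the ruler coloring
  set c : ℕ → ℕ := fun x => x.factorization 2 with hc
  have hmem : Nat.log 2 n + 1 ∈ {k : ℕ | ∃ c : ℕ → ℕ, (∀ x ∈ Finset.Icc 1 n, c x < k) ∧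
      ∀ i j : ℕ, 1 ≤ i → i ≤ j → j ≤ n →
        ∃! x, x ∈ Finset.Icc i j ∧ c x = (Finset.Icc i j).sup c} := by
    refine ⟨c, ?_, ?_⟩
    · intro x hx
      rw [Finset.mem_Icc] at hx
      have hx0 : x ≠ 0 := by omega
      have h1 : 2 ^ c x ≤ x := Nat.ordProj_le 2 hx0
      have h2 : 2 ^ c x ≤ n := le_trans h1 hx.2
      have := (Nat.le_log_iff_pow_le (by norm_num) (by omega)).mpr h2
      omega
    · intro i j hi hij hjn
      have hne : (Finset.Icc i j).Nonempty := Finset.nonempty_Icc.mpr hij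
      obtain ⟨x, hx, hxsup⟩ := Finset.exists_mem_eq_sup _ hne c
      refine ⟨x, ⟨hx, hxsup.symm⟩, ?_⟩
      -- uniqueness: no two points of max 2-adic valuation in an interval
      have main : ∀ u v : ℕ, u ∈ Finset.Icc i j → v ∈ Finset.Icc i j → u < v →
          c u = (Finset.Icc i j).sup c → c v = (Finset.Icc i j).sup c → False := by
        intro u v hu hv huv hcu hcv
        rw [Finset.mem_Icc] at hu hv
        set V := (Finset.Icc i j).sup c with hV
        have hu0 : u ≠ 0 := by omega
        have hv0 : v ≠ 0 := by omega
        have hdu : 2 ^ V ∣ u := by rw [← hcu]; exact Nat.ordProj_dvd u 2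
        have hdv : 2 ^ V ∣ v := by rw [← hcv]; exact Nat.ordProj_dvd v 2
        obtain ⟨p, hp⟩ := hdu
        obtain ⟨q, hq⟩ := hdv
        have hpq : p < q := by
          have h2V : 0 < 2 ^ V := Nat.pow_pos (n := V) (by norm_num)
          by_contra h
          push_neg at h
          have : v ≤ u := by rw [hp, hq]; exact Nat.mul_le_mul_left _ h
          omega
        -- p is odd
        have hodd : ¬ 2 ∣ p := by
          intro ⟨t, ht⟩
          have : 2 ^ (V + 1) ∣ u := ⟨t, by rw [hp, ht]; ring⟩
          have hnot : ¬ 2 ^ (u.factorization 2 + 1) ∣ u :=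
            Nat.pow_succ_factorization_not_dvd hu0 hp2
          rw [show u.factorization 2 = V from hcu] at hnot
          exact hnot this
        -- z := 2^V * (p+1) has higher valuation and lies in the interval
        set z := 2 ^ V * (p + 1) with hz
        have hz0 : z ≠ 0 := by positivity
        have hzdvd : 2 ^ (V + 1) ∣ z := by
          obtain ⟨t, ht⟩ : 2 ∣ p + 1 := by omega
          exact ⟨t, by rw [hz, ht]; ring⟩
        have hczV : V + 1 ≤ c z := (hp2.pow_dvd_iff_le_factorization hz0).mp hzdvd
        have huz : u < z := by
          rw [hp, hz]
          exact mul_lt_mul_of_pos_left (by omega) (Nat.pow_pos (n := V) (by norm_num))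
        have hzv : z ≤ v := by
          rw [hq, hz]
          exact Nat.mul_le_mul_left _ (by omega)
        have hzle : c z ≤ V := Finset.le_sup (f := c) (Finset.mem_Icc.mpr ⟨by omega, by omega⟩)
        omega
      intro y ⟨hy, hcy⟩
      by_contra hne'
      rcases lt_trichotomy y x with h | h | h
      · exact main y x hy hx h hcy hxsup.symm
      · exact hne' h
      · exact main x y hx hy h hxsup.symm hcy
  refine le_antisymm (Nat.sInf_le hmem) (le_csInf ⟨_, hmem⟩ ?_)
  rintro k ⟨c', hcol, hum⟩
  exact umc_lower n 1 n c' k hn (by omega) hcol hum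
end

section
/- Any deterministic online hitting set algorithm for the hypergraph of discrete intervals on n points has competitive ratio at least ⌊log₂ n⌋ + 1: there exists a nested decreasing sequence of intervals r₁ ⊋ r₂ ⊋ ⋯ ⊋ r_k with k = ⌊log₂ n⌋ + 1 such that, for any strategy of picking one stabbing point per interval upon arrival, each interval is unstabbed by previously chosen points, while the single point in r_k stabs all of them (so the optimum hitting set has size 1). -/
/-- Adversarial sequence: current interval endpoints together with the
history of presented intervals. -/
def advSeq (pick : List (Finset ℕ) → Finset ℕ → ℕ) (n : ℕ) :
    ℕ → (ℕ × ℕ) × List (Finset ℕ)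
  | 0 => ((1, n), [])
  | i+1 =>
    (if (advSeq pick n i).1.2 -
          pick (advSeq pick n i).2
            (Finset.Icc (advSeq pick n i).1.1 (advSeq pick n i).1.2) ≤
        pick (advSeq pick n i).2
            (Finset.Icc (advSeq pick n i).1.1 (advSeq pick n i).1.2) -
          (advSeq pick n i).1.1
     then ((advSeq pick n i).1.1,
        pick (advSeq pick n i).2
          (Finset.Icc (advSeq pick n i).1.1 (advSeq pick n i).1.2) - 1)
     else (pick (advSeq pick n i).2
          (Finset.Icc (advSeq pick n i).1.1 (advSeq pick n i).1.2) + 1,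
        (advSeq pick n i).1.2),
     (advSeq pick n i).2 ++
       [Finset.Icc (advSeq pick n i).1.1 (advSeq pick n i).1.2])

def advR (pick : List (Finset ℕ) → Finset ℕ → ℕ) (n i : ℕ) : Finset ℕ :=
  Finset.Icc (advSeq pick n i).1.1 (advSeq pick n i).1.2

lemma advHist (pick : List (Finset ℕ) → Finset ℕ → ℕ) (n : ℕ) (i : ℕ) :
    (advSeq pick n i).2 = (List.range i).map (advR pick n) := by
  induction i with
  | zero => simp [advSeq]
  | succ i ih => simp [advSeq, List.range_succ, ih, advR]

lemma advInv (pick : List (Finset ℕ) → Finset ℕ → ℕ) (n : ℕ)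
    (hpick : ∀ l r, r.Nonempty → pick l r ∈ r) :
    ∀ i, 1 ≤ n / 2 ^ i →
      1 ≤ (advSeq pick n i).1.1 ∧ (advSeq pick n i).1.2 ≤ n ∧
        n / 2 ^ i ≤ (advSeq pick n i).1.2 + 1 - (advSeq pick n i).1.1 := by
  intro i
  induction i with
  | zero => intro _; simp [advSeq]
  | succ i ih =>
    intro hstep
    have hdiv : n / 2 ^ (i+1) = n / 2 ^ i / 2 := by
      rw [pow_succ, Nat.div_div_eq_div_mul]
    have hi : 1 ≤ n / 2 ^ i := by omega
    obtain ⟨h1, h2, h3⟩ := ih hi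
    set a := (advSeq pick n i).1.1 with ha
    set b := (advSeq pick n i).1.2 with hb
    have hab : a ≤ b := by omega
    have hx : pick (advSeq pick n i).2 (Finset.Icc a b) ∈ Finset.Icc a b :=
      hpick _ _ (Finset.nonempty_Icc.mpr hab)
    rw [Finset.mem_Icc] at hx
    set x := pick (advSeq pick n i).2 (Finset.Icc a b) with hxdef
    show 1 ≤ (advSeq pick n (i+1)).1.1 ∧ _ ∧ _
    rw [advSeq]
    split_ifs with h <;> simp only [← ha, ← hb, ← hxdef] at h ⊢ <;> omega

lemma advStepProps (pick : List (Finset ℕ) → Finset ℕ → ℕ) (n : ℕ)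
    (hpick : ∀ l r, r.Nonempty → pick l r ∈ r) (i : ℕ) (hi : 1 ≤ n / 2 ^ i) :
    advR pick n (i+1) ⊆ advR pick n i ∧
      pick (advSeq pick n i).2 (advR pick n i) ∉ advR pick n (i+1) ∧
      advR pick n (i+1) ⊂ advR pick n i := by
  obtain ⟨h1, h2, h3⟩ := advInv pick n hpick i hi
  set a := (advSeq pick n i).1.1 with ha
  set b := (advSeq pick n i).1.2 with hb
  have hab : a ≤ b := by omega
  have hx : pick (advSeq pick n i).2 (Finset.Icc a b) ∈ Finset.Icc a b :=
    hpick _ _ (Finset.nonempty_Icc.mpr hab)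
  rw [Finset.mem_Icc] at hx
  set x := pick (advSeq pick n i).2 (Finset.Icc a b) with hxdef
  have hr : advR pick n (i+1) =
      if b - x ≤ x - a then Finset.Icc a (x-1) else Finset.Icc (x+1) b := by
    unfold advR
    rw [advSeq]
    split_ifs with h <;> simp [← ha, ← hb, ← hxdef, h]
  have hsub : advR pick n (i+1) ⊆ advR pick n i := by
    rw [hr]
    unfold advR
    rw [← ha, ← hb]
    split_ifs with h
    · exact Finset.Icc_subset_Icc le_rfl (by omega)
    · exact Finset.Icc_subset_Icc (by omega) le_rfl
  have hnot : x ∉ advR pick n (i+1) := by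
    rw [hr]
    split_ifs with h <;> rw [Finset.mem_Icc] <;> omega
  refine ⟨hsub, hnot, ?_⟩
  rw [Finset.ssubset_iff_of_subset hsub]
  exact ⟨x, by unfold advR; rw [← ha, ← hb, Finset.mem_Icc]; omega, hnot⟩

lemma advChain (pick : List (Finset ℕ) → Finset ℕ → ℕ) (n : ℕ)
    (hpick : ∀ l r, r.Nonempty → pick l r ∈ r)
    (hpow : ∀ k, k ≤ Nat.log 2 n → 1 ≤ n / 2 ^ k) :
    ∀ i j, i ≤ j → j ≤ Nat.log 2 n → advR pick n j ⊆ advR pick n i := by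
  intro i j hij
  induction j with
  | zero => intro _; rw [Nat.le_zero.mp hij]
  | succ j ih =>
    intro hj
    rcases Nat.lt_or_ge i (j+1) with h | h
    · have hstep := (advStepProps pick n hpick j (hpow j (by omega))).1
      exact le_trans hstep (ih (by omega) (by omega))
    · have : i = j + 1 := by omega
      simp [this]

/-- Lower bound for online hitting of discrete intervals on `{1,…,n}`: against
any deterministic strategy `pick` (choosing, given the history of previously
presented intervals and the current interval, one point of the current
interval), there is a strictly decreasing nested sequence of
`k = ⌊log₂ n⌋ + 1` intervals, starting with `[1,n]`, such that each presented
interval avoids all previously picked points (so the algorithm uses `k` distinct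
points), while every point of the last interval stabs all of them (so the
optimum hitting set has size `1`). -/
theorem online_intervals_lower_bound (n : ℕ) (hn : 1 ≤ n)
    (pick : List (Finset ℕ) → Finset ℕ → ℕ)
    (hpick : ∀ l r, r.Nonempty → pick l r ∈ r) :
    ∃ r : ℕ → Finset ℕ,
      (∀ i < Nat.log 2 n + 1, ∃ a b : ℕ, 1 ≤ a ∧ a ≤ b ∧ b ≤ n ∧
          r i = Finset.Icc a b) ∧
      r 0 = Finset.Icc 1 n ∧
      (∀ i, i + 1 < Nat.log 2 n + 1 → r (i + 1) ⊂ r i) ∧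
      (∀ i j, i < j → j < Nat.log 2 n + 1 →
          pick ((List.range i).map r) (r i) ∉ r j) ∧
      (∀ x ∈ r (Nat.log 2 n), ∀ i < Nat.log 2 n + 1, x ∈ r i) := by
  have hpow : ∀ k, k ≤ Nat.log 2 n → 1 ≤ n / 2 ^ k := by
    intro k hk
    rw [Nat.one_le_div_iff (pow_pos (by norm_num) k)]
    exact le_trans (Nat.pow_le_pow_right (by norm_num) hk)
      (Nat.pow_log_le_self 2 (by omega))
  refine ⟨advR pick n, ?_, ?_, ?_, ?_, ?_⟩
  · intro i hi
    obtain ⟨h1, h2, h3⟩ := advInv pick n hpick i (hpow i (by omega))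
    have := hpow i (by omega)
    exact ⟨(advSeq pick n i).1.1, (advSeq pick n i).1.2, h1, by omega, h2, rfl⟩
  · simp [advR, advSeq]
  · intro i hi
    exact (advStepProps pick n hpick i (hpow i (by omega))).2.2
  · intro i j hij hj hmem
    rw [← advHist] at hmem
    have hnot := (advStepProps pick n hpick i (hpow i (by omega))).2.1
    exact hnot (advChain pick n hpick hpow (i+1) j hij (by omega) hmem)
  · intro x hx i hi
    exact advChain pick n hpick hpow i (Nat.log 2 n) (by omega) le_rfl hx
end

section
/- Let H=(X,R) be an I-type hypergraph that is separable (every singleton {x} is a range). Then the best competitive ratio of a deterministic online hitting set algorithm for H equals the unique-max chromatic number of H: ρ(H) = χ_um(H). -/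
/-- `A` is a (deterministic) online hitting set algorithm: it maps a finite
sequence of presented ranges to a hitting set, never removes chosen points, and
always stabs all presented ranges. -/
def IsOnlineAlg {X : Type*} [DecidableEq X] (R : Set (Finset X))
    (A : List (Finset X) → Finset X) : Prop :=
  (∀ l r, A l ⊆ A (l ++ [r])) ∧
  (∀ l : List (Finset X), (∀ r ∈ l, r ∈ R) → ∀ r ∈ l, (A l ∩ r).Nonempty)

/-- `A` is `k`-competitive: on every input sequence of ranges, the hitting set
it outputs is at most `k` times larger than any (hence the optimal) hitting set
of the presented ranges. -/
def IsCompetitive {X : Type*} [DecidableEq X] (R : Set (Finset X))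
    (A : List (Finset X) → Finset X) (k : ℕ) : Prop :=
  ∀ l : List (Finset X), (∀ r ∈ l, r ∈ R) →
    ∀ S : Finset X, (∀ r ∈ l, (S ∩ r).Nonempty) → (A l).card ≤ k * S.card

/-! ### Auxiliary material -/

section Aux

variable {X : Type*} [DecidableEq X]

/-- The greedy online algorithm associated to a coloring `c`: for every new
range, if it is not yet stabbed, add all points of maximal color in it. -/
def umStep (c : X → ℕ) (S r : Finset X) : Finset X :=
  if (S ∩ r).Nonempty then S else S ∪ r.filter (fun y => c y = r.sup c)

lemma subset_umStep (c : X → ℕ) (S r : Finset X) : S ⊆ umStep c S r := by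
  unfold umStep; split
  · exact subset_rfl
  · exact Finset.subset_union_left

lemma subset_foldl_umStep (c : X → ℕ) :
    ∀ (l : List (Finset X)) (S : Finset X), S ⊆ l.foldl (umStep c) S
  | [], S => subset_rfl
  | r :: l, S => (subset_umStep c S r).trans (subset_foldl_umStep c l _)

lemma foldl_umStep_stab (c : X → ℕ) {R : Set (Finset X)} (hne : ∀ r ∈ R, r.Nonempty) :
    ∀ (l : List (Finset X)) (S : Finset X), (∀ r ∈ l, r ∈ R) →
      ∀ r ∈ l, ((l.foldl (umStep c) S) ∩ r).Nonempty := by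
  intro l
  induction l with
  | nil => simp
  | cons a l ih =>
    intro S hl r hr
    rcases List.mem_cons.1 hr with rfl | hr
    · have h1 : (umStep c S r ∩ r).Nonempty := by
        unfold umStep; split
        · assumption
        · obtain ⟨y, hy, hsup⟩ := Finset.exists_mem_eq_sup r (hne r (hl r hr)) c
          exact ⟨y, Finset.mem_inter.2
            ⟨Finset.mem_union_right _ (Finset.mem_filter.2 ⟨hy, hsup.symm⟩), hy⟩⟩
      obtain ⟨y, hy⟩ := h1
      rw [Finset.mem_inter] at hy
      exact ⟨y, Finset.mem_inter.2 ⟨subset_foldl_umStep c l _ hy.1, hy.2⟩⟩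
    · exact ih (umStep c S a) (fun r hr => hl r (List.mem_cons_of_mem _ hr)) r hr

lemma foldl_umStep_origin (c : X → ℕ) :
    ∀ (l : List (Finset X)) (S : Finset X) (x : X), x ∈ l.foldl (umStep c) S →
      x ∈ S ∨ ∃ r ∈ l, x ∈ r ∧ c x = r.sup c := by
  intro l
  induction l with
  | nil => intro S x hx; exact Or.inl hx
  | cons a l ih =>
    intro S x hx
    rcases ih (umStep c S a) x hx with h | ⟨r, hr, hxr, hc⟩
    · unfold umStep at h
      split at h
      · exact Or.inl h
      · rcases Finset.mem_union.1 h with h | h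
        · exact Or.inl h
        · obtain ⟨hxa, hc⟩ := Finset.mem_filter.1 h
          exact Or.inr ⟨a, List.mem_cons_self, hxa, hc⟩
    · exact Or.inr ⟨r, List.mem_cons_of_mem _ hr, hxr, hc⟩

/-- `UM R U m` : there is a coloring with colors `< m` on `U` that is
unique-max for all ranges contained in `U`. -/
def UM (R : Set (Finset X)) (U : Finset X) (m : ℕ) : Prop :=
  ∃ c : X → ℕ, (∀ x ∈ U, c x < m) ∧
    ∀ r ∈ R, r ⊆ U → ∃! x, x ∈ r ∧ c x = r.sup c

lemma UM_mono {R : Set (Finset X)} {U : Finset X} {m m' : ℕ}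
    (h : UM R U m) (hm : m ≤ m') : UM R U m' := by
  obtain ⟨c, h1, h2⟩ := h
  exact ⟨c, fun x hx => lt_of_lt_of_le (h1 x hx) hm, h2⟩

lemma UM_empty {R : Set (Finset X)} (hne : ∀ r ∈ R, r.Nonempty) (m : ℕ) :
    UM R (∅ : Finset X) m := by
  refine ⟨fun _ => 0, by simp, fun r hr hsub => ?_⟩
  exact absurd (Finset.subset_empty.1 hsub) (hne r hr).ne_empty

lemma uniqueMax_congr {c c' : X → ℕ} {r : Finset X} (h : ∀ y ∈ r, c y = c' y)
    (h' : ∃! x, x ∈ r ∧ c' x = r.sup c') : ∃! x, x ∈ r ∧ c x = r.sup c := by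
  have hsup : r.sup c = r.sup c' := Finset.sup_congr rfl h
  obtain ⟨x, ⟨hxr, hxc⟩, hu⟩ := h'
  refine ⟨x, ⟨hxr, by rw [h x hxr, hsup]; exact hxc⟩, ?_⟩
  rintro y ⟨hyr, hyc⟩
  exact hu y ⟨hyr, by rw [← h y hyr, ← hsup]; exact hyc⟩

lemma UM_insert {R : Set (Finset X)} {U : Finset X} {m : ℕ}
    (h : UM R U m) (a : X) : UM R (insert a U) (m + 1) := by
  by_cases ha : a ∈ U
  · rw [Finset.insert_eq_self.2 ha]
    exact UM_mono h (Nat.le_succ m)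
  obtain ⟨c, h1, h2⟩ := h
  refine ⟨fun y => if y = a then m else c y, ?_, ?_⟩
  · intro x hx
    rcases Finset.mem_insert.1 hx with rfl | hx
    · simp
    · simp only []
      split
      · omega
      · exact lt_of_lt_of_le (h1 x hx) (Nat.le_succ m)
  · intro r hr hsub
    set c' : X → ℕ := fun y => if y = a then m else c y with hc'
    by_cases har : a ∈ r
    · have hsup : r.sup c' = m := by
        apply le_antisymm
        · apply Finset.sup_le
          intro y hy
          by_cases hya : y = a
          · simp [hc', hya]
          · have hyU : y ∈ U := by
              have := hsub hy
              rcases Finset.mem_insert.1 this with h' | h'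
              · exact absurd h' hya
              · exact h'
            simp only [hc', if_neg hya]
            exact le_of_lt (h1 y hyU)
        · have : c' a = m := by simp [hc']
          rw [← this]; exact Finset.le_sup har
      refine ⟨a, ⟨har, by rw [hsup]; simp [hc']⟩, ?_⟩
      rintro y ⟨hyr, hyc⟩
      by_contra hya
      have hyU : y ∈ U := by
        rcases Finset.mem_insert.1 (hsub hyr) with h' | h'
        · exact absurd h' hya
        · exact h'
      rw [hsup] at hyc
      have : c' y = c y := by simp [hc', hya]
      rw [this] at hyc
      exact absurd hyc (Nat.ne_of_lt (h1 y hyU))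
    · have hsubU : r ⊆ U := by
        intro y hy
        rcases Finset.mem_insert.1 (hsub hy) with rfl | h'
        · exact absurd hy har
        · exact h'
      apply uniqueMax_congr (c' := c) _ (h2 r hr hsubU)
      intro y hy
      have hya : y ≠ a := fun h' => har (h' ▸ hy)
      simp [hc', hya]

lemma UM_union {R : Set (Finset X)} {U : Finset X} {m : ℕ}
    (h : UM R U m) (P : Finset X) : UM R (U ∪ P) (m + P.card) := by
  induction P using Finset.induction_on with
  | empty => simpa using h
  | @insert a P ha ih =>
    rw [Finset.union_insert, Finset.card_insert_of_notMem ha, ← Nat.add_assoc]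
    exact UM_insert ih a

lemma UM_combine {R : Set (Finset X)} {U M : Finset X} {m : ℕ}
    (h1 : UM R M m) (h2 : UM R (U \ M) m)
    (hmax : ∀ r ∈ R, r ⊆ U → (r ∩ M).Nonempty → r ⊆ M) : UM R U m := by
  obtain ⟨c₁, hb₁, hu₁⟩ := h1
  obtain ⟨c₂, hb₂, hu₂⟩ := h2
  refine ⟨fun y => if y ∈ M then c₁ y else c₂ y, ?_, ?_⟩
  · intro x hx
    by_cases hxM : x ∈ M
    · simpa [hxM] using hb₁ x hxM
    · simp only [if_neg hxM]
      exact hb₂ x (Finset.mem_sdiff.2 ⟨hx, hxM⟩)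
  · intro r hr hsub
    by_cases hint : (r ∩ M).Nonempty
    · have hrM : r ⊆ M := hmax r hr hsub hint
      apply uniqueMax_congr (c' := c₁) _ (hu₁ r hr hrM)
      intro y hy; simp [hrM hy]
    · have hrM : r ⊆ U \ M := by
        intro y hy
        refine Finset.mem_sdiff.2 ⟨hsub hy, fun hM => hint ⟨y, Finset.mem_inter.2 ⟨hy, hM⟩⟩⟩
      apply uniqueMax_congr (c' := c₂) _ (hu₂ r hr hrM)
      intro y hy
      have : y ∉ M := (Finset.mem_sdiff.1 (hrM hy)).2
      simp [this]

end Aux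

/-! ### The adversary argument: a `k`-competitive algorithm yields a
unique-max coloring with `k` colors. -/

section Adversary

variable {X : Type*} [Fintype X] [DecidableEq X]

lemma claimC {R : Set (Finset X)} (hne : ∀ r ∈ R, r.Nonempty)
    (hI : IType R) (hsep : ∀ x : X, ({x} : Finset X) ∈ R)
    {A : List (Finset X) → Finset X} {k : ℕ}
    (hA : IsOnlineAlg R A) (hC : IsCompetitive R A k) :
    ∀ (n : ℕ) (U : Finset X) (l : List (Finset X)), U.card ≤ n →
      (∀ r ∈ l, r ∈ R) → (∀ x ∈ U, x ∉ A l) → (∀ z ∈ U, ∀ r ∈ l, z ∈ r) →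
      UM R U (k - (A l).card) := by
  intro n
  induction n with
  | zero =>
    intro U l hcard _ _ _
    rw [Nat.le_zero, Finset.card_eq_zero] at hcard
    subst hcard
    exact UM_empty hne _
  | succ n ih =>
    intro U l hcard hl hdisj hstab
    rcases U.eq_empty_or_nonempty with rfl | ⟨x₀, hx₀⟩
    · exact UM_empty hne _
    -- pick a maximal (by cardinality) range containing x₀ inside U
    classical
    have hCne : (U.powerset.filter (fun r => r ∈ R ∧ x₀ ∈ r)).Nonempty := by
      refine ⟨{x₀}, Finset.mem_filter.2 ⟨Finset.mem_powerset.2 ?_, hsep x₀, Finset.mem_singleton_self x₀⟩⟩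
      simpa using hx₀
    obtain ⟨M, hM, hMmax⟩ :=
      (U.powerset.filter (fun r => r ∈ R ∧ x₀ ∈ r)).exists_max_image Finset.card hCne
    rw [Finset.mem_filter, Finset.mem_powerset] at hM
    obtain ⟨hMU, hMR, hx₀M⟩ := hM
    -- maximality: any range inside U meeting M is contained in M
    have hmax : ∀ r ∈ R, r ⊆ U → (r ∩ M).Nonempty → r ⊆ M := by
      intro r hr hrU hint
      have hu : r ∪ M ∈ R := hI r hr M hMR hint
      have huU : r ∪ M ⊆ U := Finset.union_subset hrU hMU
      have hcardle : (r ∪ M).card ≤ M.card := by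
        refine hMmax (r ∪ M) (Finset.mem_filter.2 ⟨Finset.mem_powerset.2 huU, hu, ?_⟩)
        exact Finset.mem_union_right _ hx₀M
      have : r ∪ M = M :=
        (Finset.eq_of_subset_of_card_le Finset.subset_union_right hcardle).symm
      intro y hy
      rw [← this]
      exact Finset.mem_union_left _ hy
    -- present M to the algorithm
    set l₁ := l ++ [M] with hl₁def
    have hl₁ : ∀ r ∈ l₁, r ∈ R := by
      intro r hr
      rcases List.mem_append.1 hr with h | h
      · exact hl r h
      · rw [List.mem_singleton.1 h]; exact hMR
    have hMl₁ : M ∈ l₁ := List.mem_append.2 (Or.inr (List.mem_singleton_self M))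
    have hmono : A l ⊆ A l₁ := hA.1 l M
    have hstabM : (A l₁ ∩ M).Nonempty := hA.2 l₁ hl₁ M hMl₁
    set P := A l₁ ∩ M with hPdef
    set U₁ := M \ A l₁ with hU₁def
    -- invariants for the recursive call inside M
    have hU₁sub : U₁ ⊆ U := fun y hy => hMU (Finset.mem_sdiff.1 hy).1
    have hU₁card : U₁.card ≤ n := by
      obtain ⟨p, hp⟩ := hstabM
      rw [Finset.mem_inter] at hp
      have hpU : p ∈ U := hMU hp.2
      have hpU₁ : p ∉ U₁ := fun h => (Finset.mem_sdiff.1 h).2 hp.1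
      have : U₁.card < U.card := Finset.card_lt_card ⟨hU₁sub, fun h => hpU₁ (h hpU)⟩
      omega
    have h1 : UM R U₁ (k - (A l₁).card) := by
      refine ih U₁ l₁ hU₁card hl₁ ?_ ?_
      · intro x hx; exact (Finset.mem_sdiff.1 hx).2
      · intro z hz r hr
        rcases List.mem_append.1 hr with h | h
        · exact hstab z (hU₁sub hz) r h
        · rw [List.mem_singleton.1 h]
          exact (Finset.mem_sdiff.1 hz).1
    have hMeq : U₁ ∪ P = M := by
      ext y
      simp only [Finset.mem_union, hU₁def, hPdef, Finset.mem_sdiff, Finset.mem_inter]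
      tauto
    have h2 : UM R M ((k - (A l₁).card) + P.card) := hMeq ▸ UM_union h1 P
    -- competitiveness bound : the algorithm has picked at most k points
    have hk1 : (A l₁).card ≤ k := by
      obtain ⟨z, hz⟩ := hne M hMR
      have hzstab : ∀ r ∈ l₁, (({z} : Finset X) ∩ r).Nonempty := by
        intro r hr
        rcases List.mem_append.1 hr with h | h
        · exact ⟨z, Finset.mem_inter.2 ⟨Finset.mem_singleton_self z, hstab z (hMU hz) r h⟩⟩
        · rw [List.mem_singleton.1 h]
          exact ⟨z, Finset.mem_inter.2 ⟨Finset.mem_singleton_self z, hz⟩⟩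
      have := hC l₁ hl₁ {z} hzstab
      simpa using this
    have hsum : (A l).card + P.card ≤ (A l₁).card := by
      have hdisjP : Disjoint (A l) P := by
        rw [Finset.disjoint_left]
        intro p hp hpP
        exact hdisj p (hMU (Finset.mem_inter.1 hpP).2) hp
      have hsub : A l ∪ P ⊆ A l₁ :=
        Finset.union_subset hmono Finset.inter_subset_left
      calc (A l).card + P.card = (A l ∪ P).card := (Finset.card_union_of_disjoint hdisjP).symm
        _ ≤ (A l₁).card := Finset.card_le_card hsub
    have h3 : UM R M (k - (A l).card) := UM_mono h2 (by omega)
    -- recursive call on the rest of U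
    have h4 : UM R (U \ M) (k - (A l).card) := by
      refine ih (U \ M) l ?_ hl ?_ ?_
      · have : (U \ M).card < U.card :=
          Finset.card_lt_card ⟨Finset.sdiff_subset,
            fun h => (Finset.mem_sdiff.1 (h hx₀)).2 hx₀M⟩
        omega
      · intro x hx; exact hdisj x (Finset.mem_sdiff.1 hx).1
      · intro z hz; exact hstab z (Finset.mem_sdiff.1 hz).1
    exact UM_combine h3 h4 hmax

end Adversary

/-- For a finite I-type separable hypergraph, the best competitive ratio of a
deterministic online hitting set algorithm equals the unique-max chromatic
number: `ρ(H) = χ_um(H)`. -/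
theorem competitive_eq_uniqueMaxChromatic {X : Type*} [Fintype X] [DecidableEq X]
    (R : Set (Finset X)) (hne : ∀ r ∈ R, r.Nonempty)
    (hI : IType R) (hsep : ∀ x : X, ({x} : Finset X) ∈ R) :
    sInf {k : ℕ | ∃ A : List (Finset X) → Finset X,
        IsOnlineAlg R A ∧ IsCompetitive R A k}
      = sInf {k : ℕ | ∃ c : X → ℕ, (∀ x, c x < k) ∧
          ∀ r ∈ R, ∃! x, x ∈ r ∧ c x = r.sup c} := by
  classical
  have hset : {k : ℕ | ∃ A : List (Finset X) → Finset X,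
        IsOnlineAlg R A ∧ IsCompetitive R A k}
      = {k : ℕ | ∃ c : X → ℕ, (∀ x, c x < k) ∧
          ∀ r ∈ R, ∃! x, x ∈ r ∧ c x = r.sup c} := by
    ext k
    simp only [Set.mem_setOf_eq]
    constructor
    · -- from an algorithm to a coloring
      rintro ⟨A, hon, hcomp⟩
      have hA0 : A [] = ∅ := by
        have := hcomp [] (by simp) ∅ (by simp)
        simpa [Finset.card_eq_zero] using this
      have hClaim := claimC hne hI hsep hon hcomp (Finset.univ.card) Finset.univ []
        le_rfl (by simp) (by simp [hA0]) (by simp)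
      rw [hA0] at hClaim
      simp only [Finset.card_empty, Nat.sub_zero] at hClaim
      obtain ⟨c, hc1, hc2⟩ := hClaim
      exact ⟨c, fun x => hc1 x (Finset.mem_univ x),
        fun r hr => hc2 r hr (Finset.subset_univ r)⟩
    · -- from a coloring to an algorithm
      rintro ⟨c, hck, hcu⟩
      refine ⟨fun l => l.foldl (umStep c) ∅,
        ⟨fun l r => ?_, fun l hl r hr => foldl_umStep_stab c hne l ∅ hl r hr⟩, ?_⟩
      · show List.foldl (umStep c) ∅ l ⊆ List.foldl (umStep c) ∅ (l ++ [r])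
        rw [List.foldl_append]
        simpa using subset_umStep c (l.foldl (umStep c) ∅) r
      · intro l hl S hS
        -- injection of the chosen points into (range k) × S
        set T := l.foldl (umStep c) ∅ with hT
        have hprop : ∀ x ∈ T, ∃ s, s ∈ S ∧ ∃ r, r ∈ l ∧ x ∈ r ∧ s ∈ r ∧ c x = r.sup c := by
          intro x hx
          rcases foldl_umStep_origin c l ∅ x hx with h | ⟨r, hr, hxr, hc⟩
          · simp at h
          · obtain ⟨s, hs⟩ := hS r hr
            rw [Finset.mem_inter] at hs
            exact ⟨s, hs.1, r, hr, hxr, hs.2, hc⟩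
        set f : X → ℕ × X := fun x =>
          (c x, if h : ∃ s, s ∈ S ∧ ∃ r, r ∈ l ∧ x ∈ r ∧ s ∈ r ∧ c x = r.sup c
            then h.choose else x) with hf
        have hcard : T.card ≤ (Finset.range k ×ˢ S).card := by
          apply Finset.card_le_card_of_injOn f
          · intro x hx
            have h := hprop x hx
            rw [Finset.mem_coe, Finset.mem_product]
            constructor
            · exact Finset.mem_range.2 (hck x)
            · simp only [hf, dif_pos h]
              exact h.choose_spec.1
          · intro x₁ hx₁ x₂ hx₂ hfe
            simp only [Finset.mem_coe] at hx₁ hx₂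
            have h₁ := hprop x₁ hx₁
            have h₂ := hprop x₂ hx₂
            simp only [hf, dif_pos h₁, dif_pos h₂, Prod.mk.injEq] at hfe
            obtain ⟨hceq, hseq⟩ := hfe
            obtain ⟨hsS₁, r₁, hr₁l, hx₁r, hsr₁, hc₁⟩ := h₁.choose_spec
            obtain ⟨hsS₂, r₂, hr₂l, hx₂r, hsr₂, hc₂⟩ := h₂.choose_spec
            rw [hseq] at hsr₁
            have hint : (r₁ ∩ r₂).Nonempty :=
              ⟨h₂.choose, Finset.mem_inter.2 ⟨hsr₁, hsr₂⟩⟩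
            have hu : r₁ ∪ r₂ ∈ R := hI r₁ (hl r₁ hr₁l) r₂ (hl r₂ hr₂l) hint
            have hsup : (r₁ ∪ r₂).sup c = c x₁ := by
              rw [Finset.sup_union, ← hc₁, ← hc₂, hceq]
              exact sup_idem _
            obtain ⟨y, _, huniq⟩ := hcu (r₁ ∪ r₂) hu
            have e₁ : x₁ = y := huniq x₁ ⟨Finset.mem_union_left _ hx₁r, hsup.symm⟩
            have e₂ : x₂ = y := huniq x₂ ⟨Finset.mem_union_right _ hx₂r,
              by rw [hsup, hceq]⟩
            rw [e₁, e₂]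
        calc T.card ≤ (Finset.range k ×ˢ S).card := hcard
          _ = k * S.card := by simp
  rw [hset]
end

section
/- Let H=(X,R) be an I-type hypergraph with a unique-max coloring using k colors. Then the online algorithm that stabs each unstabbed arriving range by its unique maximum-color point has competitive ratio at most k: for every finite sequence σ of ranges, the number of points chosen by the algorithm is at most k times the size of a minimum hitting set of σ. -/
/-- The greedy online hitting set algorithm: process the ranges of the list
(latest arrival first in the list structure, i.e. recursion processes earlier
arrivals first); an arriving range already stabbed is ignored, otherwise it is
stabbed by its designated stabbing point `stab r`. -/
def greedyAlg {X : Type*} [DecidableEq X] (stab : Finset X → X) :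
    List (Finset X) → Finset X
  | [] => ∅
  | r :: l =>
      let C := greedyAlg stab l
      if (r ∩ C).Nonempty then C else insert (stab r) C

/-- The ranges that were unstabbed on arrival and got stabbed by the algorithm. -/
def stabbedRanges {X : Type*} [DecidableEq X] (stab : Finset X → X) :
    List (Finset X) → Finset (Finset X)
  | [] => ∅
  | r :: l =>
      if (r ∩ greedyAlg stab l).Nonempty then stabbedRanges stab l
      else insert r (stabbedRanges stab l)

lemma greedy_eq_image {X : Type*} [DecidableEq X] (stab : Finset X → X)
    (l : List (Finset X)) :
    greedyAlg stab l = (stabbedRanges stab l).image stab := by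
  induction l with
  | nil => rfl
  | cons r l ih =>
    simp only [greedyAlg, stabbedRanges]
    split_ifs with h
    · exact ih
    · rw [Finset.image_insert, ih]

lemma mem_of_mem_stabbed {X : Type*} [DecidableEq X] (stab : Finset X → X)
    (l : List (Finset X)) {r : Finset X} (hr : r ∈ stabbedRanges stab l) :
    r ∈ l := by
  induction l with
  | nil => simp [stabbedRanges] at hr
  | cons a l ih =>
    simp only [stabbedRanges] at hr
    split_ifs at hr with h
    · exact List.mem_cons_of_mem _ (ih hr)
    · rcases Finset.mem_insert.mp hr with h' | h'
      · exact h' ▸ List.mem_cons_self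
      · exact List.mem_cons_of_mem _ (ih h')

lemma stabbed_pairwise_disjoint {X : Type*} [DecidableEq X]
    (R : Set (Finset X)) (hI : IType R) (c : X → ℕ)
    (hum : ∀ r ∈ R, ∃! x, x ∈ r ∧ c x = r.sup c)
    (stab : Finset X → X)
    (hstab : ∀ r ∈ R, stab r ∈ r ∧ c (stab r) = r.sup c)
    (l : List (Finset X)) (hl : ∀ r ∈ l, r ∈ R) :
    ∀ r₁ ∈ stabbedRanges stab l, ∀ r₂ ∈ stabbedRanges stab l,
      r₁ ≠ r₂ → c (stab r₁) = c (stab r₂) → Disjoint r₁ r₂ := by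
  induction l with
  | nil => intro r₁ hr₁; simp [stabbedRanges] at hr₁
  | cons a l ih =>
    have hl' : ∀ r ∈ l, r ∈ R := fun r hr => hl r (List.mem_cons_of_mem _ hr)
    have key : ∀ r' ∈ stabbedRanges stab l,
        ¬(a ∩ greedyAlg stab l).Nonempty → c (stab a) = c (stab r') →
        Disjoint a r' := by
      intro r' hr' hcond hc
      by_contra hnd
      have hint : (a ∩ r').Nonempty := Finset.not_disjoint_iff_nonempty_inter.mp hnd
      have haR : a ∈ R := hl a List.mem_cons_self
      have hr'R : r' ∈ R := hl' r' (mem_of_mem_stabbed stab l hr')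
      have huR : a ∪ r' ∈ R := hI a haR r' hr'R hint
      obtain ⟨hsa, hca⟩ := hstab a haR
      obtain ⟨hsr', hcr'⟩ := hstab r' hr'R
      have hsup : (a ∪ r').sup c = c (stab a) := by
        rw [Finset.sup_union, ← hca, ← hcr', ← hc, sup_idem]
      obtain ⟨x, _, hxuniq⟩ := hum (a ∪ r') huR
      have h1 : stab a = x := hxuniq _ ⟨Finset.mem_union_left _ hsa, hsup.symm⟩
      have h2 : stab r' = x := hxuniq _ ⟨Finset.mem_union_right _ hsr',
        (hsup.trans hc).symm⟩
      have heq : stab a = stab r' := h1.trans h2.symm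
      apply hcond
      refine ⟨stab a, Finset.mem_inter.mpr ⟨hsa, ?_⟩⟩
      rw [greedy_eq_image, heq]
      exact Finset.mem_image_of_mem stab hr'
    intro r₁ hr₁ r₂ hr₂ hne hc
    simp only [stabbedRanges] at hr₁ hr₂
    split_ifs at hr₁ hr₂ with h
    · exact ih hl' r₁ hr₁ r₂ hr₂ hne hc
    · rcases Finset.mem_insert.mp hr₁ with h₁ | h₁ <;>
        rcases Finset.mem_insert.mp hr₂ with h₂ | h₂
      · exact absurd (h₁.trans h₂.symm) hne
      · exact h₁ ▸ key r₂ h₂ h (h₁ ▸ hc)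
      · exact (h₂ ▸ key r₁ h₁ h (h₂ ▸ hc.symm)).symm
      · exact ih hl' r₁ h₁ r₂ h₂ hne hc

/-- In an I-type hypergraph with a unique-max coloring with colors `{1,…,k}`,
the online algorithm stabbing each unstabbed arriving range by its unique
maximum-color point is `k`-competitive: the number of chosen points is at most
`k` times the size of any hitting set of the presented ranges. -/
theorem greedy_competitive {X : Type*} [DecidableEq X]
    (R : Set (Finset X)) (hI : IType R)
    (k : ℕ) (c : X → ℕ) (hcol : ∀ x, 1 ≤ c x ∧ c x ≤ k)
    (hum : ∀ r ∈ R, ∃! x, x ∈ r ∧ c x = r.sup c)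
    (stab : Finset X → X)
    (hstab : ∀ r ∈ R, stab r ∈ r ∧ c (stab r) = r.sup c)
    (l : List (Finset X)) (hl : ∀ r ∈ l, r ∈ R)
    (S : Finset X) (hS : ∀ r ∈ l, (S ∩ r).Nonempty) :
    (greedyAlg stab l).card ≤ k * S.card := by
  classical
  set T := stabbedRanges stab l with hT
  have hdisj := stabbed_pairwise_disjoint R hI c hum stab hstab l hl
  -- greedy output has card ≤ card T
  have hcard1 : (greedyAlg stab l).card ≤ T.card := by
    rw [greedy_eq_image]
    exact Finset.card_image_le
  -- partition T by color of stab point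
  have hmem : ∀ r ∈ T, c (stab r) ∈ Finset.Icc 1 k := by
    intro r _
    exact Finset.mem_Icc.mpr (hcol (stab r))
  have hcard2 : T.card = ∑ γ ∈ Finset.Icc 1 k,
      (T.filter fun r => c (stab r) = γ).card :=
    Finset.card_eq_sum_card_fiberwise hmem
  -- each fiber injects into S
  have hfiber : ∀ γ, (T.filter fun r => c (stab r) = γ).card ≤ S.card := by
    intro γ
    set f : Finset X → X := fun r =>
      if h : (S ∩ r).Nonempty then h.choose else stab r with hf
    apply Finset.card_le_card_of_injOn f
    · intro r hr
      have hrl : r ∈ l := mem_of_mem_stabbed stab l (Finset.mem_filter.mp hr).1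
      have hne : (S ∩ r).Nonempty := hS r hrl
      simp only [hf, dif_pos hne]
      exact (Finset.mem_inter.mp hne.choose_spec).1
    · intro r₁ hr₁ r₂ hr₂ hfeq
      obtain ⟨hr₁T, hc₁⟩ := Finset.mem_filter.mp hr₁
      obtain ⟨hr₂T, hc₂⟩ := Finset.mem_filter.mp hr₂
      by_contra hne
      have hd := hdisj r₁ hr₁T r₂ hr₂T hne (hc₁.trans hc₂.symm)
      have hne₁ : (S ∩ r₁).Nonempty := hS r₁ (mem_of_mem_stabbed stab l hr₁T)
      have hne₂ : (S ∩ r₂).Nonempty := hS r₂ (mem_of_mem_stabbed stab l hr₂T)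
      have h₁ : f r₁ ∈ r₁ := by
        simp only [hf, dif_pos hne₁]
        exact (Finset.mem_inter.mp hne₁.choose_spec).2
      have h₂ : f r₂ ∈ r₂ := by
        simp only [hf, dif_pos hne₂]
        exact (Finset.mem_inter.mp hne₂.choose_spec).2
      exact Finset.disjoint_left.mp hd h₁ (hfeq ▸ h₂)
  calc (greedyAlg stab l).card ≤ T.card := hcard1
    _ = ∑ γ ∈ Finset.Icc 1 k, (T.filter fun r => c (stab r) = γ).card := hcard2
    _ ≤ ∑ _γ ∈ Finset.Icc 1 k, S.card := Finset.sum_le_sum fun γ _ => hfiber γ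
    _ = k * S.card := by simp [Nat.card_Icc]
end
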